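/- Let A → M be a Lie algebroid with anchor ρ and bracket [[-,-]], B ⊂ A a Lie subalgebroid, and ∇ a flat connection on A/B such that the sheaf Γ_∇ of sections X of A with X mod B ∇-flat forms a Lie subalgebra containing Γ(B) as an ideal. Define R(X,Y)(Z mod B) := ([∇^{A/B}_X, ∇^{A/B}_Y] − ∇^{A/B}_{[[X,Y]]})(Z mod B), where ∇^{A/B}_X(Y mod B) = ∇_{ρ(Y)}(X mod B) − [[Y,X]] mod B. Then R(X,Y) = 0 for all X, Y ∈ Γ(A); i.e., ∇^{A/B} is flat. -/

import Mathlib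

/-- With an IM foliation `(TM, B, ∇)` of a Lie algebroid `A` over `TM`, the
induced `A`-connection `∇^{A/B}` on `A/B`, defined by
`∇^{A/B}_X(Y mod B) = ∇_{ρY}(X mod B) − [[Y,X]] mod B`, is flat:
`R(X,Y) = [∇^{A/B}_X, ∇^{A/B}_Y] − ∇^{A/B}_{[[X,Y]]} = 0`. -/
theorem im_foliation_induced_connection_flat
    {R ΓA : Type*} [CommRing R] [Algebra ℝ R]
    [AddCommGroup ΓA] [Module R ΓA]
    (ρ : ΓA →ₗ[R] Derivation ℝ R R)
    (br : ΓA → ΓA → ΓA)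
    (hbr_add₁ : ∀ X Y Z : ΓA, br (X + Y) Z = br X Z + br Y Z)
    (hbr_add₂ : ∀ X Y Z : ΓA, br X (Y + Z) = br X Y + br X Z)
    (hbr_anti : ∀ X Y : ΓA, br X Y = - br Y X)
    (hbr_jacobi : ∀ X Y Z : ΓA, br X (br Y Z) = br (br X Y) Z + br Y (br X Z))
    (hbr_leib : ∀ (X : ΓA) (f : R) (Y : ΓA), br X (f • Y) = (ρ X) f • Y + f • br X Y)
    (hanchor : ∀ X Y : ΓA, ρ (br X Y) = ⁅ρ X, ρ Y⁆)
    (B : Submodule R ΓA)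
    (hB_sub : ∀ X Y : ΓA, X ∈ B → Y ∈ B → br X Y ∈ B)
    (nabla : Derivation ℝ R R → (ΓA ⧸ B) → (ΓA ⧸ B))
    (hnabla_addZ : ∀ (Z W : Derivation ℝ R R) (q : ΓA ⧸ B),
      nabla (Z + W) q = nabla Z q + nabla W q)
    (hnabla_smulZ : ∀ (f : R) (Z : Derivation ℝ R R) (q : ΓA ⧸ B),
      nabla (f • Z) q = f • nabla Z q)
    (hnabla_addq : ∀ (Z : Derivation ℝ R R) (q q' : ΓA ⧸ B),
      nabla Z (q + q') = nabla Z q + nabla Z q')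
    (hnabla_leib : ∀ (Z : Derivation ℝ R R) (f : R) (q : ΓA ⧸ B),
      nabla Z (f • q) = Z f • q + f • nabla Z q)
    (hnabla_flat : ∀ (Z W : Derivation ℝ R R) (q : ΓA ⧸ B),
      nabla Z (nabla W q) - nabla W (nabla Z q) = nabla ⁅Z, W⁆ q)
    -- IM foliation: flat-mod-B sections form a Lie subalgebra with Γ(B) as ideal,
    -- and their classes generate Γ(A/B)
    (hflat_sub : ∀ X Y : ΓA, (∀ Z, nabla Z (Submodule.Quotient.mk X) = 0) →
      (∀ Z, nabla Z (Submodule.Quotient.mk Y) = 0) →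
      (∀ Z, nabla Z (Submodule.Quotient.mk (br X Y)) = 0))
    (hflat_ideal : ∀ X Y : ΓA, (∀ Z, nabla Z (Submodule.Quotient.mk X) = 0) →
      Y ∈ B → br X Y ∈ B)
    (hgen : Submodule.span R
      ((Submodule.Quotient.mk : ΓA → ΓA ⧸ B) ''
        {X : ΓA | ∀ Z, nabla Z (Submodule.Quotient.mk X) = 0}) = ⊤)
    -- the induced A-connection ∇^{A/B}
    (nablaAB : ΓA → (ΓA ⧸ B) → (ΓA ⧸ B))
    (hAB : ∀ X Y : ΓA, nablaAB X (Submodule.Quotient.mk Y)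
      = nabla (ρ Y) (Submodule.Quotient.mk X) - Submodule.Quotient.mk (br Y X)) :
    ∀ X Y Z : ΓA,
      nablaAB X (nablaAB Y (Submodule.Quotient.mk Z))
        - nablaAB Y (nablaAB X (Submodule.Quotient.mk Z))
        = nablaAB (br X Y) (Submodule.Quotient.mk Z) := by

  classical
  -- abbreviation for the flat set
  set S : Set ΓA := {X : ΓA | ∀ Z, nabla Z (Submodule.Quotient.mk X) = 0} with hSdef
  -- basic bracket lemmas
  have hbr0r : ∀ X : ΓA, br X 0 = 0 := by
    intro X
    have h := hbr_add₂ X 0 0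
    rw [add_zero] at h
    exact (left_eq_add.mp h)
  have hbr_negr : ∀ X Y : ΓA, br X (-Y) = - br X Y := by
    intro X Y
    have h := hbr_add₂ X Y (-Y)
    rw [add_neg_cancel, hbr0r] at h
    exact eq_neg_of_add_eq_zero_right h.symm
  have hbr_negl : ∀ X Y : ΓA, br (-X) Y = - br X Y := by
    intro X Y
    rw [hbr_anti (-X) Y, hbr_negr, neg_neg, hbr_anti Y X]
  have hbr_subr : ∀ X Y Z : ΓA, br X (Y - Z) = br X Y - br X Z := by
    intro X Y Z
    rw [sub_eq_add_neg, hbr_add₂, hbr_negr, sub_eq_add_neg]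
  have hbr_smull : ∀ (f : R) (X Y : ΓA), br (f • X) Y = f • br X Y - (ρ Y) f • X := by
    intro f X Y
    rw [hbr_anti (f • X) Y, hbr_leib, hbr_anti Y X, smul_neg]
    abel
  -- basic nabla lemmas
  have hn0 : ∀ W, nabla W (0 : ΓA ⧸ B) = 0 := by
    intro W
    have h := hnabla_addq W 0 0
    rw [add_zero] at h
    exact left_eq_add.mp h
  -- surjectivity of mk
  have hsurj : ∀ q : ΓA ⧸ B, ∃ W : ΓA, (Submodule.Quotient.mk W : ΓA ⧸ B) = q :=
    fun q => Submodule.Quotient.mk_surjective B q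
  -- decomposition of any section
  have hmem : ∀ X : ΓA, X ∈ Submodule.span R S ⊔ B := by
    intro X
    have h1 : (Submodule.Quotient.mk X : ΓA ⧸ B) ∈
        Submodule.span R ((Submodule.Quotient.mk : ΓA → ΓA ⧸ B) '' S) := by
      rw [hgen]; trivial
    have himg : ((Submodule.Quotient.mk : ΓA → ΓA ⧸ B) '' S) = (B.mkQ '' S) := rfl
    rw [himg, Submodule.span_image] at h1
    obtain ⟨a, ha, hax⟩ := Submodule.mem_map.mp h1
    have hb : X - a ∈ B := by
      have : (Submodule.Quotient.mk a : ΓA ⧸ B) = Submodule.Quotient.mk X := hax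
      have h2 : a - X ∈ B := (Submodule.Quotient.eq B).mp this
      simpa [neg_sub] using B.neg_mem h2
    exact Submodule.mem_sup.mpr ⟨a, ha, X - a, hb, by abel⟩
  -- linearity of nablaAB in the argument
  have hAB_addq : ∀ (X : ΓA) (q q' : ΓA ⧸ B),
      nablaAB X (q + q') = nablaAB X q + nablaAB X q' := by
    intro X q q'
    obtain ⟨W, rfl⟩ := hsurj q
    obtain ⟨W', rfl⟩ := hsurj q'
    rw [← Submodule.Quotient.mk_add, hAB X (W + W'), hAB X W, hAB X W', map_add,
      hnabla_addZ, hbr_add₁, Submodule.Quotient.mk_add]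
    abel
  have hAB_zeroq : ∀ X : ΓA, nablaAB X (0 : ΓA ⧸ B) = 0 := by
    intro X
    have h := hAB_addq X 0 0
    rw [add_zero] at h
    exact left_eq_add.mp h
  have hAB_leibq : ∀ (X : ΓA) (f : R) (q : ΓA ⧸ B),
      nablaAB X (f • q) = (ρ X) f • q + f • nablaAB X q := by
    intro X f q
    obtain ⟨W, rfl⟩ := hsurj q
    rw [← Submodule.Quotient.mk_smul, hAB X (f • W), hAB X W, map_smul, hnabla_smulZ,
      hbr_smull]
    simp only [Submodule.Quotient.mk_sub, Submodule.Quotient.mk_smul, smul_sub]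
    abel
  -- linearity of nablaAB in the direction
  have hAB_addX : ∀ (X X' : ΓA) (q : ΓA ⧸ B),
      nablaAB (X + X') q = nablaAB X q + nablaAB X' q := by
    intro X X' q
    obtain ⟨W, rfl⟩ := hsurj q
    rw [hAB, hAB, hAB, Submodule.Quotient.mk_add, hnabla_addq, hbr_add₂,
      Submodule.Quotient.mk_add]
    abel
  have hAB_smulX : ∀ (f : R) (X : ΓA) (q : ΓA ⧸ B),
      nablaAB (f • X) q = f • nablaAB X q := by
    intro f X q
    obtain ⟨W, rfl⟩ := hsurj q
    rw [hAB, hAB, Submodule.Quotient.mk_smul, hnabla_leib, hbr_leib]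
    simp only [Submodule.Quotient.mk_add, Submodule.Quotient.mk_smul, smul_sub]
    abel
  have hAB_zeroX : ∀ q : ΓA ⧸ B, nablaAB 0 q = 0 := by
    intro q
    obtain ⟨W, rfl⟩ := hsurj q
    rw [hAB, hbr0r, Submodule.Quotient.mk_zero, hn0, sub_zero]
  have hAB_negX : ∀ (X : ΓA) (q : ΓA ⧸ B), nablaAB (-X) q = - nablaAB X q := by
    intro X q
    have h := hAB_addX X (-X) q
    rw [add_neg_cancel, hAB_zeroX] at h
    exact eq_neg_of_add_eq_zero_right h.symm
  have hAB_subX : ∀ (X X' : ΓA) (q : ΓA ⧸ B),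
      nablaAB (X - X') q = nablaAB X q - nablaAB X' q := by
    intro X X' q
    rw [sub_eq_add_neg, hAB_addX, hAB_negX, sub_eq_add_neg]
  -- nablaAB with direction in B kills flat classes
  have hABm : ∀ Z : ΓA, Z ∈ S → ∀ c ∈ B, nablaAB c (Submodule.Quotient.mk Z) = 0 := by
    intro Z hZ c hc
    have h1 : (Submodule.Quotient.mk c : ΓA ⧸ B) = 0 :=
      (Submodule.Quotient.mk_eq_zero B).mpr hc
    have h2 : (Submodule.Quotient.mk (br Z c) : ΓA ⧸ B) = 0 :=
      (Submodule.Quotient.mk_eq_zero B).mpr (hflat_ideal Z c hZ hc)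
    rw [hAB, h1, h2, hn0, sub_zero]
  -- descent of nablaAB · (mk Z) for Z flat
  have hAB_descent : ∀ Z : ΓA, Z ∈ S → ∀ W X' : ΓA,
      (Submodule.Quotient.mk W : ΓA ⧸ B) = Submodule.Quotient.mk X' →
      nablaAB W (Submodule.Quotient.mk Z) = nablaAB X' (Submodule.Quotient.mk Z) := by
    intro Z hZ W X' h
    have hb : W - X' ∈ B := (Submodule.Quotient.eq B).mp h
    have h0 := hABm Z hZ (W - X') hb
    rw [hAB_subX] at h0
    exact sub_eq_zero.mp h0
  -- key identity: nabla (ρ b) (mk X) = mk (br b X) for b ∈ B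
  have hD : ∀ b ∈ B, ∀ X : ΓA,
      nabla (ρ b) (Submodule.Quotient.mk X) = Submodule.Quotient.mk (br b X) := by
    intro b hb X
    obtain ⟨a, ha, c, hc, rfl⟩ := Submodule.mem_sup.mp (hmem X)
    have Dc : nabla (ρ b) (Submodule.Quotient.mk c) = Submodule.Quotient.mk (br b c) := by
      rw [(Submodule.Quotient.mk_eq_zero B).mpr hc, hn0,
        (Submodule.Quotient.mk_eq_zero B).mpr (hB_sub b c hb hc)]
    have Da : nabla (ρ b) (Submodule.Quotient.mk a) = Submodule.Quotient.mk (br b a) := by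
      induction ha using Submodule.span_induction with
      | mem x hx =>
          have h2 : br x b ∈ B := hflat_ideal x b hx hb
          have h3 : (Submodule.Quotient.mk (br b x) : ΓA ⧸ B) = 0 := by
            rw [hbr_anti b x, Submodule.Quotient.mk_neg,
              (Submodule.Quotient.mk_eq_zero B).mpr h2, neg_zero]
          rw [hx (ρ b), h3]
      | zero => simp [hn0, hbr0r]
      | add x y hx hy ihx ihy =>
          rw [Submodule.Quotient.mk_add, hnabla_addq, hbr_add₂,
            Submodule.Quotient.mk_add, ihx, ihy]
      | smul r x hx ih =>
          rw [Submodule.Quotient.mk_smul, hnabla_leib, ih, hbr_leib,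
            Submodule.Quotient.mk_add, Submodule.Quotient.mk_smul,
            Submodule.Quotient.mk_smul]
    rw [Submodule.Quotient.mk_add, hnabla_addq, hbr_add₂, Submodule.Quotient.mk_add,
      Da, Dc]
  -- commutation lemma
  have hComm : ∀ Z : ΓA, Z ∈ S → ∀ b ∈ B,
      ∀ (q : ΓA ⧸ B) (W V : ΓA), (Submodule.Quotient.mk W : ΓA ⧸ B) = q →
        (Submodule.Quotient.mk V : ΓA ⧸ B) = nabla (ρ b) q →
        nabla (ρ b) (nablaAB W (Submodule.Quotient.mk Z))
          = nablaAB V (Submodule.Quotient.mk Z) := by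
    intro Z hZ b hb q
    have hq : q ∈ Submodule.span R ((Submodule.Quotient.mk : ΓA → ΓA ⧸ B) '' S) := by
      rw [hgen]; trivial
    induction hq using Submodule.span_induction with
    | mem x hx =>
        obtain ⟨x₀, hx₀, rfl⟩ := hx
        intro W V hW hV
        have h1 : nablaAB W (Submodule.Quotient.mk Z)
            = Submodule.Quotient.mk (br x₀ Z) := by
          rw [hAB_descent Z hZ W x₀ hW, hAB, hx₀ (ρ Z), zero_sub, hbr_anti Z x₀,
            Submodule.Quotient.mk_neg, neg_neg]
        have h3 : V ∈ B :=
          (Submodule.Quotient.mk_eq_zero B).mp (hV.trans (hx₀ (ρ b)))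
        rw [h1, hflat_sub x₀ Z hx₀ hZ (ρ b), hABm Z hZ V h3]
    | zero =>
        intro W V hW hV
        have hWB : W ∈ B := (Submodule.Quotient.mk_eq_zero B).mp hW
        have hVB : V ∈ B := (Submodule.Quotient.mk_eq_zero B).mp (by rw [hV, hn0])
        rw [hABm Z hZ W hWB, hn0, hABm Z hZ V hVB]
    | add x y hxm hym ihx ihy =>
        intro W V hW hV
        obtain ⟨W1, hW1⟩ := hsurj x
        obtain ⟨W2, hW2⟩ := hsurj y
        obtain ⟨V1, hV1⟩ := hsurj (nabla (ρ b) x)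
        obtain ⟨V2, hV2⟩ := hsurj (nabla (ρ b) y)
        have e1 : nablaAB W (Submodule.Quotient.mk Z)
            = nablaAB W1 (Submodule.Quotient.mk Z)
              + nablaAB W2 (Submodule.Quotient.mk Z) := by
          rw [← hAB_addX]
          exact hAB_descent Z hZ W (W1 + W2)
            (by rw [hW, Submodule.Quotient.mk_add, hW1, hW2])
        have e2 : nablaAB V (Submodule.Quotient.mk Z)
            = nablaAB V1 (Submodule.Quotient.mk Z)
              + nablaAB V2 (Submodule.Quotient.mk Z) := by
          rw [← hAB_addX]
          exact hAB_descent Z hZ V (V1 + V2)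
            (by rw [hV, Submodule.Quotient.mk_add, hV1, hV2, hnabla_addq])
        rw [e1, hnabla_addq, ihx W1 V1 hW1 hV1, ihy W2 V2 hW2 hV2, e2]
    | smul r x hxm ih =>
        intro W V hW hV
        obtain ⟨W1, hW1⟩ := hsurj x
        obtain ⟨V1, hV1⟩ := hsurj (nabla (ρ b) x)
        have e1 : nablaAB W (Submodule.Quotient.mk Z)
            = r • nablaAB W1 (Submodule.Quotient.mk Z) := by
          rw [← hAB_smulX]
          exact hAB_descent Z hZ W (r • W1)
            (by rw [hW, Submodule.Quotient.mk_smul, hW1])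
        have e2 : nablaAB V (Submodule.Quotient.mk Z)
            = (ρ b) r • nablaAB W1 (Submodule.Quotient.mk Z)
              + r • nablaAB V1 (Submodule.Quotient.mk Z) := by
          rw [← hAB_smulX, ← hAB_smulX, ← hAB_addX]
          exact hAB_descent Z hZ V ((ρ b) r • W1 + r • V1)
            (by rw [hV, hnabla_leib, Submodule.Quotient.mk_add,
              Submodule.Quotient.mk_smul, Submodule.Quotient.mk_smul, hW1, hV1])
        rw [e1, hnabla_leib, ih W1 V1 hW1 hV1, e2]
  -- curvature vanishes when first slot is in B (and base point flat)
  have hGb : ∀ Z : ΓA, Z ∈ S → ∀ b ∈ B, ∀ Y : ΓA,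
      nablaAB b (nablaAB Y (Submodule.Quotient.mk Z))
        - nablaAB Y (nablaAB b (Submodule.Quotient.mk Z))
        = nablaAB (br b Y) (Submodule.Quotient.mk Z) := by
    intro Z hZ b hb Y
    rw [hABm Z hZ b hb, hAB_zeroq]
    obtain ⟨W, hW⟩ := hsurj (nablaAB Y (Submodule.Quotient.mk Z))
    have h1 : nablaAB b (nablaAB Y (Submodule.Quotient.mk Z))
        = nabla (ρ b) (nablaAB Y (Submodule.Quotient.mk Z)) := by
      rw [← hW, hAB, (Submodule.Quotient.mk_eq_zero B).mpr hb, hn0, zero_sub,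
        hD b hb W, hbr_anti b W, Submodule.Quotient.mk_neg]
    rw [h1, sub_zero]
    exact hComm Z hZ b hb (Submodule.Quotient.mk Y) Y (br b Y) rfl (hD b hb Y).symm
  -- curvature on three flat sections: Jacobi identity
  have key : ∀ U V : ΓA, U ∈ S →
      nablaAB U (Submodule.Quotient.mk V) = Submodule.Quotient.mk (br U V) := by
    intro U V hU
    rw [hAB, hU (ρ V), zero_sub, hbr_anti V U, Submodule.Quotient.mk_neg, neg_neg]
  have hflat3 : ∀ X Y Z : ΓA, X ∈ S → Y ∈ S → Z ∈ S →
      nablaAB X (nablaAB Y (Submodule.Quotient.mk Z))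
        - nablaAB Y (nablaAB X (Submodule.Quotient.mk Z))
        = nablaAB (br X Y) (Submodule.Quotient.mk Z) := by
    intro X Y Z hX hY hZ
    rw [key Y Z hY, key X (br Y Z) hX, key X Z hX, key Y (br X Z) hY,
      key (br X Y) Z (hflat_sub X Y hX hY), ← Submodule.Quotient.mk_sub]
    exact congrArg _ (by rw [hbr_jacobi X Y Z]; abel)
  -- reduce the second slot
  have hXflat_red : ∀ Z : ΓA, Z ∈ S → ∀ X : ΓA, X ∈ S → ∀ Y : ΓA,
      nablaAB X (nablaAB Y (Submodule.Quotient.mk Z))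
        - nablaAB Y (nablaAB X (Submodule.Quotient.mk Z))
        = nablaAB (br X Y) (Submodule.Quotient.mk Z) := by
    intro Z hZ X hX Y
    obtain ⟨a, ha, c, hc, rfl⟩ := Submodule.mem_sup.mp (hmem Y)
    have Sc : nablaAB X (nablaAB c (Submodule.Quotient.mk Z))
        - nablaAB c (nablaAB X (Submodule.Quotient.mk Z))
        = nablaAB (br X c) (Submodule.Quotient.mk Z) := by
      have h := hGb Z hZ c hc X
      rw [hbr_anti X c, hAB_negX, ← h]
      abel
    have Sa : nablaAB X (nablaAB a (Submodule.Quotient.mk Z))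
        - nablaAB a (nablaAB X (Submodule.Quotient.mk Z))
        = nablaAB (br X a) (Submodule.Quotient.mk Z) := by
      induction ha using Submodule.span_induction with
      | mem y hy => exact hflat3 X y Z hX hy hZ
      | zero => simp [hbr0r, hAB_zeroX, hAB_zeroq]
      | add y y' hym hym' ihy ihy' =>
          rw [hAB_addX, hAB_addq, hAB_addX, hbr_add₂, hAB_addX, ← ihy, ← ihy']
          abel
      | smul r y hym ih =>
          simp only [hAB_smulX, hAB_leibq, hbr_leib, hAB_addX]
          rw [← ih, smul_sub]
          abel
    rw [hAB_addX, hAB_addq, hAB_addX, hbr_add₂, hAB_addX, ← Sa, ← Sc]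
    abel
  -- reduce the first slot
  have hZred : ∀ Z : ΓA, Z ∈ S → ∀ X Y : ΓA,
      nablaAB X (nablaAB Y (Submodule.Quotient.mk Z))
        - nablaAB Y (nablaAB X (Submodule.Quotient.mk Z))
        = nablaAB (br X Y) (Submodule.Quotient.mk Z) := by
    intro Z hZ X Y
    obtain ⟨a, ha, c, hc, rfl⟩ := Submodule.mem_sup.mp (hmem X)
    have Sc : nablaAB c (nablaAB Y (Submodule.Quotient.mk Z))
        - nablaAB Y (nablaAB c (Submodule.Quotient.mk Z))
        = nablaAB (br c Y) (Submodule.Quotient.mk Z) := hGb Z hZ c hc Y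
    have Sa : nablaAB a (nablaAB Y (Submodule.Quotient.mk Z))
        - nablaAB Y (nablaAB a (Submodule.Quotient.mk Z))
        = nablaAB (br a Y) (Submodule.Quotient.mk Z) := by
      induction ha using Submodule.span_induction with
      | mem x hx => exact hXflat_red Z hZ x hx Y
      | zero => simp [hbr_anti 0 Y, hbr0r, hAB_zeroX, hAB_zeroq, hAB_negX]
      | add x x' hxm hxm' ihx ihx' =>
          simp only [hAB_addX, hAB_addq, hbr_add₁]
          rw [← ihx, ← ihx']
          abel
      | smul r x hxm ih =>
          simp only [hAB_smulX, hAB_leibq, hbr_smull, hAB_subX]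
          rw [← ih, smul_sub]
          abel
    simp only [hAB_addX, hAB_addq, hbr_add₁]
    rw [← Sa, ← Sc]
    abel
  -- final reduction over the base point
  intro X Y Z
  have hq : (Submodule.Quotient.mk Z : ΓA ⧸ B) ∈
      Submodule.span R ((Submodule.Quotient.mk : ΓA → ΓA ⧸ B) '' S) := by
    rw [hgen]; trivial
  have main : ∀ q : ΓA ⧸ B,
      q ∈ Submodule.span R ((Submodule.Quotient.mk : ΓA → ΓA ⧸ B) '' S) →
      nablaAB X (nablaAB Y q) - nablaAB Y (nablaAB X q) = nablaAB (br X Y) q := by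
    intro q hq
    induction hq using Submodule.span_induction with
    | mem x hx =>
        obtain ⟨z, hz, rfl⟩ := hx
        exact hZred z hz X Y
    | zero => simp [hAB_zeroq]
    | add x y hxm hym ihx ihy =>
        simp only [hAB_addq]
        rw [← ihx, ← ihy]
        abel
    | smul r x hxm ih =>
        simp only [hAB_leibq, hAB_addq]
        rw [hanchor X Y, Derivation.commutator_apply, sub_smul, ← ih, smul_sub]
        abel
  exact main (Submodule.Quotient.mk Z) hq
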